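/- Let $X = (\mathbb{Q} \times \mathbb{R}) \cup (\mathbb{R} \times \{0\}) \subset \mathbb{R}^2$ with the metric induced from the Euclidean plane. Then $X$ is connected, $X$ is quasi-isometric to $\mathbb{R}^2$, and $\mathbb{R}^2$ has exactly one end, while $X$ has infinitely many ends. -/

import Mathlib

noncomputable section

/-- A proper ray in a topological space: a proper continuous map `[0,∞) → X`. -/
def ProperRay (X : Type*) [TopologicalSpace X] : Type _ :=
  {r : C(↥(Set.Ici (0 : ℝ)), X) // IsProperMap (⇑r)}

/-- Two proper rays determine the same end if beyond every compact set they eventually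
lie in the same path component of its complement. -/
def SameEnd {X : Type*} [TopologicalSpace X] (r r' : ProperRay X) : Prop :=
  ∀ K : Set X, IsCompact K → ∃ T : ↥(Set.Ici (0 : ℝ)),
    (∀ t, T ≤ t → r.1 t ∉ K ∧ r'.1 t ∉ K) ∧ JoinedIn Kᶜ (r.1 T) (r'.1 T)

/-- The set of ends of a topological space: proper rays modulo the same-end relation. -/
def Ends (X : Type*) [TopologicalSpace X] : Type _ :=
  Quot (@SameEnd X _)

/-- The end represented by a proper ray. -/
def ProperRay.end {X : Type*} [TopologicalSpace X] (r : ProperRay X) : Ends X :=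
  Quot.mk _ r


/-- The subset `(ℚ × ℝ) ∪ (ℝ × {0})` of the Euclidean plane. -/
def ratPlane : Set (EuclideanSpace ℝ (Fin 2)) :=
  {p | (∃ q : ℚ, (q : ℝ) = p 0) ∨ p 1 = 0}

open Set Metric Filter

/-! ### Auxiliary material -/

/-- Shorthand for the Euclidean plane. -/
abbrev E2 : Type := EuclideanSpace ℝ (Fin 2)

/-- The point of the Euclidean plane with coordinates `(a, b)`. -/
def pt (a b : ℝ) : E2 := (WithLp.equiv 2 (Fin 2 → ℝ)).symm ![a, b]

@[simp] lemma pt_zero (a b : ℝ) : pt a b 0 = a := rfl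
@[simp] lemma pt_one (a b : ℝ) : pt a b 1 = b := rfl

lemma E2_ext {p r : E2} (h0 : p 0 = r 0) (h1 : p 1 = r 1) : p = r := by
  apply (WithLp.equiv 2 (Fin 2 → ℝ)).injective
  funext i; fin_cases i; exacts [h0, h1]

lemma norm_pt (a b : ℝ) : ‖pt a b‖ = Real.sqrt (a ^ 2 + b ^ 2) := by
  rw [EuclideanSpace.norm_eq]
  simp [Fin.sum_univ_two, sq_abs]

lemma dist_pt (a b c d : ℝ) : dist (pt a b) (pt c d) = Real.sqrt ((a - c) ^ 2 + (b - d) ^ 2) := by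
  rw [EuclideanSpace.dist_eq]
  simp [Fin.sum_univ_two, Real.dist_eq, sq_abs]

lemma le_norm_pt (a b : ℝ) : b ≤ ‖pt a b‖ := by
  rw [norm_pt]
  calc b ≤ |b| := le_abs_self b
  _ = Real.sqrt (b ^ 2) := (Real.sqrt_sq_eq_abs b).symm
  _ ≤ _ := Real.sqrt_le_sqrt (by nlinarith [sq_nonneg a])

lemma continuous_pt {α : Type*} [TopologicalSpace α] {f g : α → ℝ} (hf : Continuous f)
    (hg : Continuous g) : Continuous fun x => pt (f x) (g x) := by
  refine (PiLp.continuous_toLp (p := 2) (β := fun _ : Fin 2 => ℝ)).comp (continuous_pi fun i => ?_)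
  fin_cases i
  · simpa using hf
  · simpa using hg

lemma continuous_coord (i : Fin 2) : Continuous fun p : E2 => p i :=
  (continuous_apply i).comp (PiLp.continuous_ofLp (p := 2) (β := fun _ : Fin 2 => ℝ))

/-! ### Paths along rays, escaping compacts -/

lemma joinedIn_ray {X : Type*} [TopologicalSpace X] (r : C(↥(Set.Ici (0 : ℝ)), X))
    {a b : ↥(Set.Ici (0 : ℝ))} (hab : a ≤ b) {S : Set X} (h : ∀ t, a ≤ t → r t ∈ S) :
    JoinedIn S (r a) (r b) := by
  have key : ∀ s : unitInterval, (a : ℝ) ≤ (1 - s) * a + s * b := by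
    intro s
    have h1 : (0 : ℝ) ≤ (s : ℝ) := s.2.1
    have h2 : (s : ℝ) ≤ 1 := s.2.2
    have hab' : (a : ℝ) ≤ b := hab
    nlinarith
  have mem : ∀ s : unitInterval, ((1 - s) * a + s * b : ℝ) ∈ Set.Ici (0 : ℝ) :=
    fun s => le_trans a.2 (key s)
  refine ⟨⟨⟨fun s => r ⟨(1 - s) * a + s * b, mem s⟩, ?_⟩, ?_, ?_⟩, fun s => ?_⟩
  · exact r.continuous.comp (Continuous.subtype_mk (by fun_prop) _)
  · exact congrArg r (Subtype.ext (by norm_num))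
  · exact congrArg r (Subtype.ext (by norm_num))
  · exact h _ (key s)

lemma ray_escape {X : Type*} [TopologicalSpace X] (r : ProperRay X) {K : Set X}
    (hK : IsCompact K) : ∃ T : ↥(Set.Ici (0 : ℝ)), ∀ t, T ≤ t → r.1 t ∉ K := by
  have hC : IsCompact (⇑r.1 ⁻¹' K) := r.2.isCompact_preimage hK
  obtain ⟨M, hM⟩ := (hC.image continuous_subtype_val).bddAbove
  refine ⟨⟨max 0 (M + 1), Set.mem_Ici.mpr (le_max_left _ _)⟩, fun t ht hmem => ?_⟩
  have h1 : (t : ℝ) ≤ M := hM ⟨t, hmem, rfl⟩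
  have h2 : max 0 (M + 1) ≤ (t : ℝ) := ht
  have h3 := le_max_right 0 (M + 1)
  linarith

/-! ### `SameEnd` is an equivalence relation -/

lemma sameEnd_refl {X : Type*} [TopologicalSpace X] (r : ProperRay X) : SameEnd r r := by
  intro K hK
  obtain ⟨T, hT⟩ := ray_escape r hK
  exact ⟨T, fun t ht => ⟨hT t ht, hT t ht⟩, JoinedIn.refl (hT T le_rfl)⟩

lemma sameEnd_symm {X : Type*} [TopologicalSpace X] {r r' : ProperRay X}
    (h : SameEnd r r') : SameEnd r' r := by
  intro K hK
  obtain ⟨T, h1, h2⟩ := h K hK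
  exact ⟨T, fun t ht => ⟨(h1 t ht).2, (h1 t ht).1⟩, h2.symm⟩

lemma sameEnd_trans {X : Type*} [TopologicalSpace X] {r r' r'' : ProperRay X}
    (h : SameEnd r r') (h' : SameEnd r' r'') : SameEnd r r'' := by
  intro K hK
  obtain ⟨T1, h1, j1⟩ := h K hK
  obtain ⟨T2, h2, j2⟩ := h' K hK
  rcases le_total T1 T2 with hT | hT
  · refine ⟨T2, fun t ht => ⟨(h1 t (hT.trans ht)).1, (h2 t ht).2⟩, ?_⟩
    have ja : JoinedIn Kᶜ (r.1 T1) (r.1 T2) := joinedIn_ray r.1 hT fun t ht => (h1 t ht).1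
    have jb : JoinedIn Kᶜ (r'.1 T1) (r'.1 T2) := joinedIn_ray r'.1 hT fun t ht => (h1 t ht).2
    exact ((ja.symm.trans j1).trans jb).trans j2
  · refine ⟨T1, fun t ht => ⟨(h1 t ht).1, (h2 t (hT.trans ht)).2⟩, ?_⟩
    have jb : JoinedIn Kᶜ (r'.1 T2) (r'.1 T1) := joinedIn_ray r'.1 hT fun t ht => (h2 t ht).1
    have jc : JoinedIn Kᶜ (r''.1 T2) (r''.1 T1) := joinedIn_ray r''.1 hT fun t ht => (h2 t ht).2
    exact ((j1.trans jb.symm).trans j2).trans jc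

lemma sameEnd_equivalence (X : Type*) [TopologicalSpace X] :
    Equivalence (@SameEnd X _) :=
  ⟨sameEnd_refl, sameEnd_symm, sameEnd_trans⟩

/-! ### Properness criteria -/

lemma proper_of_le_norm {f : ↥(Set.Ici (0 : ℝ)) → E2} (hf : Continuous f)
    (h : ∀ t : ↥(Set.Ici (0 : ℝ)), (t : ℝ) ≤ ‖f t‖) : IsProperMap f := by
  rw [isProperMap_iff_isCompact_preimage]
  refine ⟨hf, fun K hK => ?_⟩
  obtain ⟨M, hM⟩ := hK.isBounded.subset_closedBall 0
  have hemb := (isClosed_Ici (a := (0:ℝ))).isClosedEmbedding_subtypeVal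
  rw [hemb.isEmbedding.isCompact_iff]
  refine IsCompact.of_isClosed_subset (isCompact_Icc (a := (0:ℝ)) (b := M))
    (hemb.isClosedMap _ ((hK.isClosed.preimage hf))) ?_
  rintro x ⟨t, htK, rfl⟩
  refine ⟨t.2, ?_⟩
  calc (t : ℝ) ≤ ‖f t‖ := h t
  _ ≤ M := by simpa [mem_closedBall_zero_iff] using hM htK

lemma IsProperMap.subtype_mk' {A Y : Type*} [TopologicalSpace A] [TopologicalSpace Y]
    {s : Set Y} {f : A → Y} (hf : IsProperMap f) (hs : ∀ a, f a ∈ s) :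
    IsProperMap (fun a => (⟨f a, hs a⟩ : s)) := by
  rw [isProperMap_iff_clusterPt]
  refine ⟨Continuous.subtype_mk hf.continuous _, fun ℱ y hy => ?_⟩
  have ht : Tendsto (Subtype.val : s → Y)
      (Filter.map (fun a => (⟨f a, hs a⟩ : s)) ℱ) (Filter.map f ℱ) := by
    rw [Filter.tendsto_map'_iff]
    exact Filter.tendsto_map
  have h2 : MapClusterPt (y : Y) ℱ f :=
    hy.map continuous_subtype_val.continuousAt ht
  obtain ⟨x, hx1, hx2⟩ := hf.clusterPt_of_mapClusterPt h2
  exact ⟨x, Subtype.ext hx1, hx2⟩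

/-! ### The plane has exactly one end -/

lemma one_lt_rank_E2 : 1 < Module.rank ℝ E2 := by
  rw [← Module.finrank_eq_rank, finrank_euclideanSpace_fin]
  exact_mod_cast (one_lt_two : (1:ℕ) < 2)

lemma joinedIn_radial {R : ℝ} {x : E2} (hx : R < ‖x‖) {c : ℝ} (hc : 1 ≤ c) :
    JoinedIn (Metric.closedBall (0 : E2) R)ᶜ x (c • x) := by
  refine ⟨⟨⟨fun s => ((1 - s) + s * c) • x, by fun_prop⟩, by simp, by simp⟩, fun s => ?_⟩
  show ((1 - s) + s * c) • x ∈ _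
  have h1 : (0 : ℝ) ≤ (s : ℝ) := s.2.1
  have h2 : (s : ℝ) ≤ 1 := s.2.2
  have hfac : 1 ≤ 1 - s + s * c := by nlinarith
  simp only [mem_compl_iff, mem_closedBall_zero_iff, not_le]
  rw [norm_smul, Real.norm_eq_abs]
  nlinarith [norm_nonneg x, le_abs_self (1 - (s:ℝ) + s * c)]

lemma joinedIn_compl_closedBall {R : ℝ} (hR : 0 ≤ R) {x y : E2} (hx : R < ‖x‖)
    (hy : R < ‖y‖) : JoinedIn (Metric.closedBall (0 : E2) R)ᶜ x y := by
  have hxpos : 0 < ‖x‖ := hR.trans_lt hx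
  have hypos : 0 < ‖y‖ := hR.trans_lt hy
  set S := max ‖x‖ ‖y‖ with hSdef
  have hxS : ‖x‖ ≤ S := le_max_left _ _
  have hyS : ‖y‖ ≤ S := le_max_right _ _
  have hcx : 1 ≤ S / ‖x‖ := (one_le_div hxpos).mpr hxS
  have hcy : 1 ≤ S / ‖y‖ := (one_le_div hypos).mpr hyS
  have hnx : ‖(S / ‖x‖) • x‖ = S := by
    rw [norm_smul, Real.norm_eq_abs, abs_of_pos (lt_of_lt_of_le one_pos hcx)]
    field_simp
  have hny : ‖(S / ‖y‖) • y‖ = S := by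
    rw [norm_smul, Real.norm_eq_abs, abs_of_pos (lt_of_lt_of_le one_pos hcy)]
    field_simp
  have hsph : IsPathConnected (Metric.sphere (0 : E2) S) :=
    isPathConnected_sphere one_lt_rank_E2 0 (hR.trans hx.le |>.trans hxS)
  have hsub : Metric.sphere (0 : E2) S ⊆ (Metric.closedBall (0 : E2) R)ᶜ := by
    intro z hz
    simp only [mem_sphere_zero_iff_norm] at hz
    simp only [mem_compl_iff, mem_closedBall_zero_iff, not_le, hz]
    exact lt_of_lt_of_le hx hxS
  have jmid : JoinedIn (Metric.closedBall (0 : E2) R)ᶜ ((S / ‖x‖) • x) ((S / ‖y‖) • y) := by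
    refine (hsph.joinedIn _ ?_ _ ?_).mono hsub
    · rw [mem_sphere_zero_iff_norm]; exact hnx
    · rw [mem_sphere_zero_iff_norm]; exact hny
  exact ((joinedIn_radial hx hcx).trans jmid).trans (joinedIn_radial hy hcy).symm

lemma plane_sameEnd (r r' : ProperRay E2) : SameEnd r r' := by
  intro K hK
  obtain ⟨R0, hR0⟩ := hK.isBounded.subset_closedBall 0
  set R := max R0 0 with hRdef
  have hR : 0 ≤ R := le_max_right _ _
  have hKB : K ⊆ Metric.closedBall (0 : E2) R :=
    hR0.trans (Metric.closedBall_subset_closedBall (le_max_left _ _))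
  have hB : IsCompact (Metric.closedBall (0 : E2) R) := isCompact_closedBall _ _
  obtain ⟨T1, h1⟩ := ray_escape r hB
  obtain ⟨T2, h2⟩ := ray_escape r' hB
  rcases le_total T1 T2 with hT | hT
  · refine ⟨T2, fun t ht => ⟨fun hm => h1 t (hT.trans ht) (hKB hm),
      fun hm => h2 t ht (hKB hm)⟩, ?_⟩
    refine JoinedIn.mono ?_ (compl_subset_compl.mpr hKB)
    have hx : R < ‖r.1 T2‖ := by
      by_contra hc
      exact h1 T2 hT (by simpa [mem_closedBall_zero_iff] using not_lt.mp hc)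
    have hy : R < ‖r'.1 T2‖ := by
      by_contra hc
      exact h2 T2 le_rfl (by simpa [mem_closedBall_zero_iff] using not_lt.mp hc)
    exact joinedIn_compl_closedBall hR hx hy
  · refine ⟨T1, fun t ht => ⟨fun hm => h1 t ht (hKB hm),
      fun hm => h2 t (hT.trans ht) (hKB hm)⟩, ?_⟩
    refine JoinedIn.mono ?_ (compl_subset_compl.mpr hKB)
    have hx : R < ‖r.1 T1‖ := by
      by_contra hc
      exact h1 T1 le_rfl (by simpa [mem_closedBall_zero_iff] using not_lt.mp hc)
    have hy : R < ‖r'.1 T1‖ := by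
      by_contra hc
      exact h2 T1 hT (by simpa [mem_closedBall_zero_iff] using not_lt.mp hc)
    exact joinedIn_compl_closedBall hR hx hy

/-- The horizontal ray `t ↦ (t, 0)` in the plane. -/
def planeRay : ProperRay E2 :=
  ⟨⟨fun t => pt t 0, continuous_pt continuous_subtype_val continuous_const⟩,
    proper_of_le_norm (continuous_pt continuous_subtype_val continuous_const)
      (fun t => by
        show (t : ℝ) ≤ ‖pt t 0‖
        calc (t : ℝ) = |(t : ℝ)| := (abs_of_nonneg t.2).symm
        _ = Real.sqrt ((t:ℝ) ^ 2 + 0 ^ 2) := by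
            rw [← Real.sqrt_sq_eq_abs]; norm_num
        _ = ‖pt t 0‖ := (norm_pt _ _).symm
        _ ≤ ‖pt t 0‖ := le_rfl)⟩

/-! ### The rational vertical rays -/

lemma ratRay_mem (q : ℚ) (t : ℝ) : pt q t ∈ ratPlane := Or.inl ⟨q, rfl⟩

/-- The vertical ray `t ↦ (q, t)` in `ratPlane`. -/
def ratRay (q : ℚ) : ProperRay ↥ratPlane :=
  ⟨⟨fun t => ⟨pt q t, ratRay_mem q t⟩,
      Continuous.subtype_mk (continuous_pt continuous_const continuous_subtype_val) _⟩,
    IsProperMap.subtype_mk'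
      (proper_of_le_norm (continuous_pt continuous_const continuous_subtype_val)
        (fun t => le_norm_pt q t)) _⟩

lemma not_sameEnd_ratRay {q q' : ℚ} (h : (q : ℝ) < q') : ¬ SameEnd (ratRay q) (ratRay q') := by
  intro hse
  set M : ℝ := max |(q : ℝ)| |(q' : ℝ)| + 1 with hMdef
  have hK0 : ∀ x : ℝ, pt x 0 ∈ ratPlane := fun x => Or.inr rfl
  set K : Set ↥ratPlane :=
    (fun x : ℝ => (⟨pt x 0, hK0 x⟩ : ↥ratPlane)) '' Set.Icc (-M) M with hKdef
  have hKc : IsCompact K := isCompact_Icc.image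
    (Continuous.subtype_mk (continuous_pt continuous_id continuous_const) _)
  obtain ⟨T, hT, γ, hγ⟩ := hse K hKc
  set x : unitInterval → ℝ := fun s => ((γ s : ↥ratPlane) : E2) 0 with hxdef
  have hxc : Continuous x :=
    (continuous_coord 0).comp (continuous_subtype_val.comp γ.continuous)
  obtain ⟨α, hαirr, hα1, hα2⟩ := exists_irrational_btwn h
  have hαM : |α| ≤ max |(q : ℝ)| |(q' : ℝ)| := by
    rw [abs_le]
    constructor
    · calc -(max |(q : ℝ)| |(q' : ℝ)|) ≤ -|(q : ℝ)| := by
            simp [neg_le_neg_iff, le_max_left]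
      _ ≤ (q : ℝ) := neg_abs_le _
      _ ≤ α := hα1.le
    · calc α ≤ (q' : ℝ) := hα2.le
      _ ≤ |(q' : ℝ)| := le_abs_self _
      _ ≤ _ := le_max_right _ _
  have hne : ∀ s, x s ≠ α := by
    intro s hs
    have hmem := (γ s).2
    have hy0 : ((γ s : ↥ratPlane) : E2) 1 = 0 := by
      rcases hmem with ⟨r, hr⟩ | h0
      · exact absurd ⟨r, hr.trans hs⟩ hαirr
      · exact h0
    refine hγ s ⟨α, ⟨?_, ?_⟩, ?_⟩
    · linarith [(neg_abs_le α)]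
    · linarith [(le_abs_self α)]
    · exact Subtype.ext (E2_ext (by simpa using hs.symm) (by simpa using hy0.symm))
  have h0 : x 0 = q := by
    have := γ.source
    simp only [hxdef]
    rw [this]
    simp [ratRay]
  have h1 : x 1 = q' := by
    have := γ.target
    simp only [hxdef]
    rw [this]
    simp [ratRay]
  haveI : PreconnectedSpace unitInterval := Subtype.preconnectedSpace isPreconnected_Icc
  have hmemIcc : α ∈ Set.Icc (x 0) (x 1) := by
    rw [h0, h1]; exact ⟨hα1.le, hα2.le⟩
  obtain ⟨s, hs⟩ := intermediate_value_univ (0 : unitInterval) 1 hxc hmemIcc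
  exact hne s hs

/-! ### Connectivity of `ratPlane` -/

lemma joinedIn_of_segment {x y : E2} {S : Set E2} (h : segment ℝ x y ⊆ S) :
    JoinedIn S x y :=
  (((convex_segment x y).isPathConnected ⟨x, left_mem_segment ℝ x y⟩).joinedIn x
    (left_mem_segment ℝ x y) y (right_mem_segment ℝ x y)).mono h

lemma ratPlane_pathConnected : IsPathConnected ratPlane := by
  refine ⟨pt 0 0, Or.inr rfl, fun {p} hp => ?_⟩
  have h1 : JoinedIn ratPlane (pt 0 0) (pt (p 0) 0) := by
    refine joinedIn_of_segment fun z hz => Or.inr ?_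
    obtain ⟨a, b, ha, hb, hab, rfl⟩ := hz
    show (a • pt 0 0 + b • pt (p 0) 0) 1 = 0
    simp [PiLp.add_apply, PiLp.smul_apply]
  have h2 : JoinedIn ratPlane (pt (p 0) 0) p := by
    rcases hp with ⟨q, hq⟩ | h0
    · refine joinedIn_of_segment fun z hz => Or.inl ⟨q, ?_⟩
      obtain ⟨a, b, ha, hb, hab, rfl⟩ := hz
      show (q : ℝ) = (a • pt (p 0) 0 + b • p) 0
      rw [hq]
      simp only [PiLp.add_apply, PiLp.smul_apply, pt_zero, smul_eq_mul]
      rw [← add_mul, hab, one_mul]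
    · have hpp : p = pt (p 0) 0 := E2_ext (by simp) (by simp [h0])
      rw [← hpp]
      exact JoinedIn.refl (Or.inr h0)
  exact h1.trans h2

/-! ### Main theorem -/

/-- The space `X = (ℚ × ℝ) ∪ (ℝ × {0})` with the metric induced from
the Euclidean plane is connected and quasi-isometric to `ℝ²`; the plane `ℝ²` has exactly
one end, while `X` has infinitely many ends.  (So the number of ends is not a
quasi-isometry invariant of non-geodesic spaces.) -/
theorem ratPlane_ends_not_qi_invariant :
    ConnectedSpace ↥ratPlane ∧
    (∃ (f : ↥ratPlane → EuclideanSpace ℝ (Fin 2)) (lam C : ℝ), 1 ≤ lam ∧ 0 ≤ C ∧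
      (∀ a b : ↥ratPlane, lam⁻¹ * dist a b - C ≤ dist (f a) (f b) ∧
        dist (f a) (f b) ≤ lam * dist a b + C) ∧
      ∀ y : EuclideanSpace ℝ (Fin 2), ∃ x : ↥ratPlane, dist y (f x) ≤ C) ∧
    (Nonempty (Ends (EuclideanSpace ℝ (Fin 2))) ∧
      Subsingleton (Ends (EuclideanSpace ℝ (Fin 2)))) ∧
    Infinite (Ends ↥ratPlane) := by
  refine ⟨?_, ?_, ⟨?_, ?_⟩, ?_⟩
  · exact Subtype.connectedSpace ratPlane_pathConnected.isConnected
  · refine ⟨Subtype.val, 1, 1, le_rfl, zero_le_one, fun a b => ?_, fun y => ?_⟩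
    · rw [Subtype.dist_eq a b]
      constructor
      · simp only [inv_one, one_mul]
        linarith [dist_nonneg (x := a.1) (y := b.1)]
      · simp only [one_mul]
        linarith [dist_nonneg (x := a.1) (y := b.1)]
    · obtain ⟨qr, hqr⟩ := exists_rat_near (y 0) one_pos
      refine ⟨⟨pt qr (y 1), ratRay_mem qr (y 1)⟩, ?_⟩
      have : y = pt (y 0) (y 1) := E2_ext rfl rfl
      calc dist y (pt qr (y 1)) = Real.sqrt ((y 0 - qr) ^ 2 + ((y 1) - (y 1)) ^ 2) := by
            rw [this, dist_pt]; norm_num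
      _ = |y 0 - qr| := by
            rw [sub_self]
            norm_num [Real.sqrt_sq_eq_abs]
      _ ≤ 1 := hqr.le
  · exact ⟨planeRay.end⟩
  · refine ⟨fun a b => ?_⟩
    induction a using Quot.ind with | _ r =>
    induction b using Quot.ind with | _ r' =>
    exact Quot.sound (plane_sameEnd r r')
  · have hinj : Function.Injective fun q : ℚ => (ratRay q).end := by
      intro q q' hqq'
      by_contra hne
      have hse : SameEnd (ratRay q) (ratRay q') :=
        ((sameEnd_equivalence ↥ratPlane).eqvGen_iff).mp (Quot.eqvGen_exact hqq')
      have hne' : (q : ℝ) ≠ (q' : ℝ) := by exact_mod_cast hne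
      rcases hne'.lt_or_gt with h | h
      · exact not_sameEnd_ratRay h hse
      · exact not_sameEnd_ratRay h (sameEnd_symm hse)
    exact Infinite.of_injective _ hinj

end
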